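/- Fix an integer K ≥ 1 and let ŝ, s : Fin K → ℝ satisfy ŝ k ≥ s k for all k ∈ Fin K. Then (1) for every H ∈ ℕ, V H ŝ ≥ V H s; and (2) if moreover ŝ ≠ s, then for every integer H ≥ 1, V H ŝ > V H s. -/

import Mathlib

open scoped BigOperators
noncomputable section

def simplex (K : ℕ) : Set (Fin K → ℝ) :=
  {q | (∀ k, 0 ≤ q k) ∧ ∑ k, q k = 1}

def simplexInt (K : ℕ) : Set (Fin K → ℝ) :=
  {r | (∀ k, 0 < r k) ∧ ∑ k, r k = 1}

noncomputable def V (K : ℕ) : ℕ → (Fin K → ℝ) → ℝ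
  | 0, s => ⨆ k, s k
  | H + 1, s =>
      sInf ((fun r : Fin K → ℝ =>
        sSup ((fun q : Fin K → ℝ => V K H (fun k => s k + q k / r k)) '' simplex K))
        '' simplexInt K)

def inner' (K H : ℕ) (s r : Fin K → ℝ) : Set ℝ :=
  (fun q : Fin K → ℝ => V K H (fun k => s k + q k / r k)) '' simplex K

lemma V_zero (K : ℕ) (s : Fin K → ℝ) : V K 0 s = ⨆ k, s k := rfl

lemma V_succ (K H : ℕ) (s : Fin K → ℝ) :
    V K (H+1) s = sInf ((fun r => sSup (inner' K H s r)) '' simplexInt K) := rfl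

def vtx (K : ℕ) (j : Fin K) : Fin K → ℝ := fun k => if k = j then 1 else 0

lemma vtx_mem (K : ℕ) (j : Fin K) : vtx K j ∈ simplex K := by
  constructor
  · intro k; unfold vtx; positivity
  · simp [vtx]

lemma unif_mem (K : ℕ) (hK : 1 ≤ K) : (fun _ : Fin K => (K:ℝ)⁻¹) ∈ simplexInt K := by
  have h0 : (0:ℝ) < K := by exact_mod_cast hK
  constructor
  · intro _; positivity
  · simp [Finset.sum_const, Finset.card_univ, nsmul_eq_mul]
    field_simp

lemma simplex_le_one {K : ℕ} {q : Fin K → ℝ} (hq : q ∈ simplex K) (k : Fin K) : q k ≤ 1 := by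
  have := hq.2
  calc q k ≤ ∑ j, q j := Finset.single_le_sum (fun j _ => hq.1 j) (Finset.mem_univ k)
  _ = 1 := hq.2

lemma simplexInt_le_one {K : ℕ} {r : Fin K → ℝ} (hr : r ∈ simplexInt K) (k : Fin K) : r k ≤ 1 := by
  calc r k ≤ ∑ j, r j := Finset.single_le_sum (fun j _ => (hr.1 j).le) (Finset.mem_univ k)
  _ = 1 := hr.2

lemma one_le_inv_r {K : ℕ} {r : Fin K → ℝ} (hr : r ∈ simplexInt K) (k : Fin K) :
    1 ≤ 1 / r k :=
  (le_div_iff₀ (hr.1 k)).mpr (by simpa using simplexInt_le_one hr k)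

-- weak monotonicity
lemma V_mono (K : ℕ) (hK : 1 ≤ K) :
    ∀ H : ℕ, ∀ s t : Fin K → ℝ, (∀ k, s k ≤ t k) → V K H s ≤ V K H t := by
  haveI : Nonempty (Fin K) := ⟨⟨0, hK⟩⟩
  intro H
  induction H with
  | zero =>
    intro s t h
    rw [V_zero, V_zero]
    exact ciSup_mono (Set.Finite.bddAbove (Set.finite_range t)) h
  | succ H ih =>
    intro s t h
    rw [V_succ, V_succ]
    have hbAs : ∀ r ∈ simplexInt K, ∀ u : Fin K → ℝ, (∀ k, u k ≤ t k) →
        BddAbove (inner' K H u r) := by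
      intro r hr u hu
      refine ⟨V K H (fun k => t k + 1 / r k), ?_⟩
      rintro x ⟨q, hq, rfl⟩
      refine ih _ _ fun k => ?_
      have h1 : q k / r k ≤ 1 / r k := by gcongr; exacts [(hr.1 k).le, simplex_le_one hq k]
      have := hu k
      linarith
    -- inner sets nonempty
    have hne : ∀ (u : Fin K → ℝ) (r : Fin K → ℝ), (inner' K H u r).Nonempty :=
      fun u r => ⟨_, ⟨vtx K ⟨0, hK⟩, vtx_mem K _, rfl⟩⟩
    -- lower bound for outer set of s
    have hlow : ∀ r ∈ simplexInt K, V K H s ≤ sSup (inner' K H s r) := by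
      intro r hr
      refine le_trans (ih s (fun k => s k + (vtx K ⟨0, hK⟩) k / r k) fun k => ?_)
        (le_csSup (hbAs r hr s h) ⟨vtx K ⟨0, hK⟩, vtx_mem K _, rfl⟩)
      have : 0 ≤ (vtx K ⟨0, hK⟩) k / r k :=
        div_nonneg ((vtx_mem K _).1 k) (hr.1 k).le
      linarith
    refine le_csInf (⟨_, ⟨_, unif_mem K hK, rfl⟩⟩) ?_
    rintro b ⟨r, hr, rfl⟩
    calc sInf ((fun r => sSup (inner' K H s r)) '' simplexInt K)
        ≤ sSup (inner' K H s r) := by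
          refine csInf_le ⟨V K H s, ?_⟩ ⟨r, hr, rfl⟩
          rintro x ⟨r', hr', rfl⟩
          exact hlow r' hr'
      _ ≤ sSup (inner' K H t r) := by
          refine csSup_le (hne s r) ?_
          rintro x ⟨q, hq, rfl⟩
          refine le_trans (ih _ _ fun k => by have := h k; linarith)
            (le_csSup (hbAs r hr t fun k => le_refl _) ⟨q, hq, rfl⟩)

section Facts
variable {K : ℕ}

lemma bddAbove_inner (hK : 1 ≤ K) (H : ℕ) (s : Fin K → ℝ) {r : Fin K → ℝ} (hr : r ∈ simplexInt K) :
    BddAbove (inner' K H s r) := by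
  refine ⟨V K H (fun k => s k + 1 / r k), ?_⟩
  rintro x ⟨q, hq, rfl⟩
  refine V_mono K hK H _ _ fun k => ?_
  have h1 : q k / r k ≤ 1 / r k := by gcongr; exacts [(hr.1 k).le, simplex_le_one hq k]
  linarith

lemma inner_nonempty (hK : 1 ≤ K) (H : ℕ) (s r : Fin K → ℝ) : (inner' K H s r).Nonempty :=
  ⟨_, ⟨vtx K ⟨0, hK⟩, vtx_mem K _, rfl⟩⟩

lemma V_le_sSup_inner (hK : 1 ≤ K) (H : ℕ) (s : Fin K → ℝ) {r : Fin K → ℝ} (hr : r ∈ simplexInt K)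
    {q : Fin K → ℝ} (hq : q ∈ simplex K) :
    V K H (fun k => s k + q k / r k) ≤ sSup (inner' K H s r) :=
  le_csSup (bddAbove_inner hK H s hr) ⟨q, hq, rfl⟩

lemma V_le_inner (hK : 1 ≤ K) (H : ℕ) (s : Fin K → ℝ) {r : Fin K → ℝ} (hr : r ∈ simplexInt K) :
    V K H s ≤ sSup (inner' K H s r) := by
  refine le_trans (V_mono K hK H s (fun k => s k + (vtx K ⟨0, hK⟩) k / r k) fun k => ?_)
    (V_le_sSup_inner hK H s hr (vtx_mem K _))
  have : 0 ≤ (vtx K ⟨0, hK⟩) k / r k := div_nonneg ((vtx_mem K _).1 k) (hr.1 k).le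
  linarith

lemma bddBelow_outer (hK : 1 ≤ K) (H : ℕ) (s : Fin K → ℝ) :
    BddBelow ((fun r => sSup (inner' K H s r)) '' simplexInt K) := by
  refine ⟨V K H s, ?_⟩
  rintro x ⟨r, hr, rfl⟩
  exact V_le_inner hK H s hr

lemma V_succ_le (hK : 1 ≤ K) (H : ℕ) (s : Fin K → ℝ) {r : Fin K → ℝ} (hr : r ∈ simplexInt K) :
    V K (H+1) s ≤ sSup (inner' K H s r) := by
  rw [V_succ]
  exact csInf_le (bddBelow_outer hK H s) ⟨r, hr, rfl⟩

lemma coord_le (hK : 1 ≤ K) (H : ℕ) (s : Fin K → ℝ) (j : Fin K) : s j ≤ V K H s := by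
  haveI : Nonempty (Fin K) := ⟨⟨0, hK⟩⟩
  induction H generalizing s with
  | zero =>
    rw [V_zero]
    exact le_ciSup (Set.Finite.bddAbove (Set.finite_range s)) j
  | succ H ih =>
    rw [V_succ]
    refine le_csInf ⟨_, ⟨_, unif_mem K hK, rfl⟩⟩ ?_
    rintro b ⟨r, hr, rfl⟩
    refine le_trans ?_ (V_le_sSup_inner hK H s hr (vtx_mem K j))
    refine le_trans ?_ (ih _)
    have : 0 ≤ (vtx K j) j / r j := div_nonneg ((vtx_mem K _).1 j) (hr.1 j).le
    linarith

lemma V_upper (hK : 1 ≤ K) (H : ℕ) (s : Fin K → ℝ) : V K H s ≤ (⨆ j, s j) + H * K := by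
  haveI : Nonempty (Fin K) := ⟨⟨0, hK⟩⟩
  induction H generalizing s with
  | zero => simp [V_zero]
  | succ H ih =>
    refine le_trans (V_succ_le hK H s (unif_mem K hK)) ?_
    refine le_trans (csSup_le (inner_nonempty hK H s _) ?_) (le_refl ((⨆ j, s j) + K + H * K)) |>.trans (by push_cast; ring_nf; exact le_refl _)
    rintro x ⟨q, hq, rfl⟩
    refine le_trans (ih _) ?_
    have hsup : (⨆ k, (s k + q k / (K:ℝ)⁻¹)) ≤ (⨆ j, s j) + K := by
      refine ciSup_le fun k => ?_
      have h2 : q k / (K:ℝ)⁻¹ = q k * K := by field_simp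
      have h3 : q k * K ≤ 1 * K := by
        have h0 : (0:ℝ) ≤ K := Nat.cast_nonneg K
        exact mul_le_mul_of_nonneg_right (simplex_le_one hq k) h0
      have h4 : s k ≤ ⨆ j, s j := le_ciSup (Set.Finite.bddAbove (Set.finite_range s)) k
      rw [h2]; linarith
    linarith

end Facts

def gam (K : ℕ) : ℕ → ℝ → ℝ
  | 0, _ => 1
  | 1, D => (8 * (K:ℝ) * ((K:ℝ) + D + 2)^2)⁻¹
  | (H+2), D => gam K (H+1) (D + ((H:ℝ)+2) * (K:ℝ) + 2)

lemma gam_pos {K : ℕ} (hK : 1 ≤ K) : ∀ H : ℕ, ∀ D : ℝ, 0 ≤ D → 0 < gam K H D := by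
  intro H
  induction H with
  | zero => intro D _; simp [gam]
  | succ H ih =>
    cases H with
    | zero =>
      intro D hD
      have h0 : (0:ℝ) < K := by exact_mod_cast hK
      simp only [gam]
      positivity
    | succ H' =>
      intro D hD
      have h0 : (0:ℝ) ≤ K := Nat.cast_nonneg K
      simp only [gam]
      exact ih _ (by positivity)

lemma gam_one_le {K : ℕ} (hK : 1 ≤ K) {D : ℝ} (hD : 0 ≤ D) : gam K 1 D ≤ 1/8 := by
  have h1 : (1:ℝ) ≤ K := by exact_mod_cast hK
  simp only [gam]
  rw [show (1:ℝ)/8 = ((8:ℝ))⁻¹ by norm_num]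
  apply inv_anti₀ (by norm_num)
  nlinarith

lemma le_of_forall_eps (a b : ℝ) (h : ∀ ε : ℝ, 0 < ε → ε ≤ 1 → a ≤ b + 2*ε) : a ≤ b := by
  by_contra hc
  push_neg at hc
  rcases lt_or_ge (a - b) 1 with h1 | h1
  · have := h ((a-b)/3) (by linarith) (by linarith)
    linarith
  · have := h (1/3) (by norm_num) (by norm_num)
    linarith

lemma inv_pert {b a : ℝ} (hb : 1 ≤ b) (ha0 : 0 < a) (ha : a ≤ 1/8) :
    (b - a)⁻¹ ≤ b⁻¹ + 2*a := by
  have hba : 0 < b - a := by linarith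
  have hbpos : 0 < b := by linarith
  have hinv : b⁻¹ * b = 1 := inv_mul_cancel₀ (ne_of_gt hbpos)
  have hinvpos : 0 < b⁻¹ := by positivity
  have hinvle : b⁻¹ ≤ 1 := by
    rw [inv_le_one_iff₀]; right; exact hb
  rw [inv_eq_one_div, div_le_iff₀ hba]
  have h2 : (0:ℝ) ≤ 2*b - b⁻¹ - 2*a := by linarith
  nlinarith [mul_nonneg ha0.le h2]

lemma inv_diff {A v : ℝ} (hA : 0 < A) (hv : 0 < v) :
    A⁻¹ - (A+v)⁻¹ = v / (A*(A+v)) := by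
  have h1 : A ≠ 0 := ne_of_gt hA
  have h2 : A + v ≠ 0 := ne_of_gt (by linarith)
  field_simp
  ring

set_option maxHeartbeats 1000000 in
lemma gap_one {K : ℕ} (hK : 1 ≤ K) (D : ℝ) (hD0 : 0 ≤ D) (s : Fin K → ℝ) (k0 : Fin K)
    (c : ℝ) (hc0 : 0 < c) (hc1 : c ≤ 1) (hD : ∀ j, s j - s k0 ≤ D) :
    V K 1 s + c * gam K 1 D ≤ V K 1 (fun k => s k + if k = k0 then c else 0) := by
  haveI : Nonempty (Fin K) := ⟨⟨0, hK⟩⟩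
  set s' : Fin K → ℝ := fun k => s k + if k = k0 then c else 0 with hs'def
  clear_value s'
  have hKR : (1:ℝ) ≤ K := by exact_mod_cast hK
  set γ : ℝ := gam K 1 D with hγdef
  have hγ : γ = (8 * (K:ℝ) * ((K:ℝ) + D + 2)^2)⁻¹ := by rw [hγdef]; rfl
  clear_value γ
  have hγpos : 0 < γ := by rw [hγdef]; exact gam_pos hK 1 D hD0
  have hγle : γ ≤ 1/8 := by rw [hγdef]; exact gam_one_le hK hD0
  have hcγpos : 0 < c*γ := mul_pos hc0 hγpos
  have hcγle : c*γ ≤ 1/8 := by nlinarith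
  have hsk : ∀ k, s k ≤ s' k := fun k => by
    simp only [hs'def]; split <;> linarith
  have hs'k : ∀ k, s' k ≤ s k + c := fun k => by
    simp only [hs'def]; split <;> linarith
  have hs'k0 : s' k0 = s k0 + c := by simp [hs'def]
  apply le_of_forall_eps
  intro ε hε0 hε1
  -- near-optimal r for s'
  have hV1 : V K 1 s' = sInf ((fun r => sSup (inner' K 0 s' r)) '' simplexInt K) :=
    V_succ K 0 s'
  obtain ⟨b, ⟨r, hr, rfl⟩, hb⟩ :=
    exists_lt_of_csInf_lt
      (⟨_, ⟨_, unif_mem K hK, rfl⟩⟩ :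
        (((fun r => sSup (inner' K 0 s' r)) '' simplexInt K)).Nonempty)
      (by rw [← hV1]; exact lt_add_of_pos_right _ hε0)
  simp only at hb
  set M : ℝ := V K 1 s' + ε with hMdef
  clear_value M
  have hM : ∀ j, s' j + 1 / r j ≤ M := by
    intro j
    have h1 := coord_le hK 0 (fun k => s' k + (vtx K j) k / r k) j
    have h2 := V_le_sSup_inner hK 0 s' hr (vtx_mem K j)
    simp only [vtx, eq_self_iff_true, if_true] at h1
    simp only [vtx] at h2
    exact le_trans h1 (le_trans h2 hb.le)
  have hsuple : (⨆ j, s j) ≤ s k0 + D := ciSup_le fun j => by linarith [hD j]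
  have hsup' : (⨆ j, s' j) ≤ (⨆ j, s j) + c := ciSup_le fun j =>
    le_trans (hs'k j) (by
      have := le_ciSup (Set.Finite.bddAbove (Set.finite_range s)) j
      linarith)
  have hMle : M ≤ (⨆ j, s j) + c + K + ε := by
    have := V_upper hK 1 s'
    push_cast at this
    rw [hMdef]
    linarith
  have hA1 : ∀ j, 1 ≤ 1 / r j := fun j => one_le_inv_r hr j
  have hAk0 : 1 / r k0 ≤ D + (K:ℝ) + 1 := by
    have h1 := hM k0
    rw [hs'k0] at h1
    linarith
  have hra : ∀ j, (0:ℝ) < 1 / r j - c*γ := fun j => by have := hA1 j; linarith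
  -- per-term inverse bound
  have hterm : ∀ j, (1 / r j - c*γ)⁻¹ ≤ r j + 2*(c*γ) := by
    intro j
    have h1 := inv_pert (hA1 j) hcγpos hcγle
    have h0 : (1 / r j)⁻¹ = r j := by rw [one_div, inv_inv]
    rw [h0] at h1
    exact h1
  -- sum splitting
  have hsplit : r k0 + ∑ j ∈ Finset.univ.erase k0, r j = 1 := by
    have h := Finset.add_sum_erase (Finset.univ) r (Finset.mem_univ k0)
    rw [hr.2] at h
    exact h
  set S' : ℝ := ∑ j ∈ Finset.univ.erase k0, (1 / r j - c*γ)⁻¹ with hS'def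
  clear_value S'
  have hS'le : S' ≤ (1 - r k0) + 2*(c*γ)*K := by
    have h1 : S' ≤ ∑ j ∈ Finset.univ.erase k0, (r j + 2*(c*γ)) := by
      rw [hS'def]
      exact Finset.sum_le_sum (fun j _ => hterm j)
    have h2 : ∑ j ∈ Finset.univ.erase k0, (r j + 2*(c*γ))
        = (∑ j ∈ Finset.univ.erase k0, r j) + (Finset.univ.erase k0).card * (2*(c*γ)) := by
      rw [Finset.sum_add_distrib, Finset.sum_const, nsmul_eq_mul]
    have h3 : ((Finset.univ.erase k0).card : ℝ) ≤ K := by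
      have h5 := Finset.card_erase_le (a := k0) (s := (Finset.univ : Finset (Fin K)))
      have h4 : (Finset.univ : Finset (Fin K)).card = K := by
        rw [Finset.card_univ, Fintype.card_fin]
      exact_mod_cast le_trans h5 (le_of_eq h4)
    nlinarith [hcγpos]
  -- key inequality
  have hApos : (0:ℝ) < 1 / r k0 := by have := hA1 k0; linarith
  have hupos : (0:ℝ) < c*(1-γ) := mul_pos hc0 (by linarith)
  have hu1 : c*(1-γ) ≤ 1 := by nlinarith
  have e1 : (1 / r k0)⁻¹ - (1 / r k0 + c*(1-γ))⁻¹
      = (c*(1-γ)) / ((1 / r k0) * (1 / r k0 + c*(1-γ))) := inv_diff hApos hupos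
  have hQ : (1 / r k0) * (1 / r k0 + c*(1-γ)) ≤ ((K:ℝ)+D+2)^2 := by
    have h1 := hA1 k0
    nlinarith [hAk0]
  have e2 : (c*(1-γ)) / (((K:ℝ)+D+2)^2) ≤ (c*(1-γ)) / ((1 / r k0) * (1 / r k0 + c*(1-γ))) := by
    gcongr
  have heq : γ * (8*(K:ℝ)*((K:ℝ)+D+2)^2) = 1 := by
    rw [hγ]; apply inv_mul_cancel₀; positivity
  have e3 : 2*(c*γ)*(K:ℝ) ≤ (c*(1-γ)) / (((K:ℝ)+D+2)^2) := by
    rw [le_div_iff₀ (by positivity)]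
    have e4 : 2*(c*γ)*(K:ℝ) * (((K:ℝ)+D+2)^2) = c/4 := by
      linear_combination (c/4) * heq
    rw [e4]
    nlinarith
  have hkey : (1 / r k0 + c*(1-γ))⁻¹ ≤ r k0 - 2*(c*γ)*K := by
    have h0 : (1 / r k0)⁻¹ = r k0 := by rw [one_div, inv_inv]
    have h5 := e1
    rw [h0] at h5
    have h6 := le_trans e3 e2
    linarith
  have hr'k0 : (1 / r k0 + c*(1-γ))⁻¹ ≤ 1 - S' := by
    linarith [hS'le, hkey]
  -- define r'
  set r' : Fin K → ℝ := fun k => if k = k0 then 1 - S' else (1 / r k - c*γ)⁻¹ with hr'def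
  clear_value r'
  have hr'k0eq : r' k0 = 1 - S' := by simp [hr'def]
  have hr'pos : ∀ k, 0 < r' k := by
    intro k
    simp only [hr'def]
    split
    · have h1 : (0:ℝ) < (1 / r k0 + c*(1-γ))⁻¹ := by positivity
      linarith [hr'k0]
    · exact inv_pos.mpr (hra k)
  have hr'sum : ∑ k, r' k = 1 := by
    have h := Finset.add_sum_erase (Finset.univ) r' (Finset.mem_univ k0)
    rw [← h, hr'k0eq]
    have h2 : ∑ j ∈ Finset.univ.erase k0, r' j = S' := by
      rw [hS'def]
      apply Finset.sum_congr rfl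
      intro j hj
      have hj' := (Finset.mem_erase.mp hj).1
      simp [hr'def, hj']
    rw [h2]
    ring
  have hr'mem : r' ∈ simplexInt K := ⟨hr'pos, hr'sum⟩
  -- conclude
  have hfinal : V K 1 s ≤ M - c*γ := by
    refine le_trans (V_succ_le hK 0 s hr'mem) ?_
    refine csSup_le (inner_nonempty hK 0 s r') ?_
    rintro xv ⟨q, hq, rfl⟩
    show V K 0 (fun k => s k + q k / r' k) ≤ M - c*γ
    rw [V_zero]
    apply ciSup_le
    intro k
    have hqk : q k / r' k ≤ 1 / r' k := by
      gcongr
      exacts [(hr'pos k).le, simplex_le_one hq k]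
    by_cases hk : k = k0
    · subst hk
      have h1 : 1 / r' k ≤ 1 / r k + c*(1-γ) := by
        rw [div_le_iff₀ (hr'pos k)]
        have h3 : (1 / r k + c*(1-γ)) * (1 / r k + c*(1-γ))⁻¹ = 1 :=
          mul_inv_cancel₀ (ne_of_gt (by linarith))
        calc (1:ℝ) = (1 / r k + c*(1-γ)) * (1 / r k + c*(1-γ))⁻¹ := h3.symm
          _ ≤ (1 / r k + c*(1-γ)) * r' k := by
              apply mul_le_mul_of_nonneg_left _ (by linarith)
              rw [hr'k0eq]; exact hr'k0
      have h4 := hM k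
      rw [hs'k0] at h4
      nlinarith [hqk, h1, h4]
    · have h2 : r' k = (1 / r k - c*γ)⁻¹ := by simp [hr'def, hk]
      have h3 : 1 / r' k = 1 / r k - c*γ := by
        rw [h2, one_div, inv_inv]
      have h4 := hM k
      have h5 := hsk k
      rw [h3] at hqk
      linarith
  rw [hMdef] at hfinal
  linarith

set_option maxHeartbeats 1000000 in
lemma gap {K : ℕ} (hK : 1 ≤ K) : ∀ H : ℕ, 1 ≤ H → ∀ D : ℝ, 0 ≤ D →
    ∀ (s : Fin K → ℝ) (k0 : Fin K) (c : ℝ), 0 < c → c ≤ 1 →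
    (∀ j, s j - s k0 ≤ D) →
    V K H s + c * gam K H D ≤ V K H (fun k => s k + if k = k0 then c else 0) := by
  haveI : Nonempty (Fin K) := ⟨⟨0, hK⟩⟩
  intro H
  induction H with
  | zero => omega
  | succ H ih =>
    cases H with
    | zero =>
      intro _ D hD0 s k0 c hc0 hc1 hD
      exact gap_one hK D hD0 s k0 c hc0 hc1 hD
    | succ G =>
      intro _ D hD0 s k0 c hc0 hc1 hD
      have hG1 : 1 ≤ G + 1 := by omega
      have hgam : gam K (G+2) D = gam K (G+1) (D + ((G:ℝ)+2)*(K:ℝ) + 2) := by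
        simp only [gam]
      have hGpos : (0:ℝ) ≤ (G:ℝ) := Nat.cast_nonneg G
      have hKR : (1:ℝ) ≤ K := by exact_mod_cast hK
      have hD'0 : 0 ≤ D + ((G:ℝ)+2)*(K:ℝ) + 2 := by nlinarith
      set s' : Fin K → ℝ := fun k => s k + if k = k0 then c else 0 with hs'def
      clear_value s'
      have hsk : ∀ k, s k ≤ s' k := fun k => by
        simp only [hs'def]; split <;> linarith
      have hs'k : ∀ k, s' k ≤ s k + c := fun k => by
        simp only [hs'def]; split <;> linarith
      have hsuple : (⨆ j, s j) ≤ s k0 + D := ciSup_le fun j => by linarith [hD j]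
      have hsup' : (⨆ j, s' j) ≤ (⨆ j, s j) + c := ciSup_le fun j =>
        le_trans (hs'k j) (by
          have := le_ciSup (Set.Finite.bddAbove (Set.finite_range s)) j
          linarith)
      rw [hgam]
      apply le_of_forall_eps
      intro ε hε0 hε1
      have hV : V K (G+2) s' = sInf ((fun r => sSup (inner' K (G+1) s' r)) '' simplexInt K) :=
        V_succ K (G+1) s'
      obtain ⟨b, ⟨r, hr, rfl⟩, hb⟩ :=
        exists_lt_of_csInf_lt
          (⟨_, ⟨_, unif_mem K hK, rfl⟩⟩ :
            (((fun r => sSup (inner' K (G+1) s' r)) '' simplexInt K)).Nonempty)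
          (by rw [← hV]; exact lt_add_of_pos_right _ hε0)
      simp only at hb
      have hM : ∀ j, s' j + 1 / r j ≤ V K (G+2) s' + ε := by
        intro j
        have h1 := coord_le hK (G+1) (fun k => s' k + (vtx K j) k / r k) j
        have h2 := V_le_sSup_inner hK (G+1) s' hr (vtx_mem K j)
        simp only [vtx, eq_self_iff_true, if_true] at h1
        simp only [vtx] at h2
        exact le_trans h1 (le_trans h2 hb.le)
      have hMle : V K (G+2) s' + ε ≤ (⨆ j, s j) + c + ((G:ℝ)+2)*(K:ℝ) + ε := by
        have := V_upper hK (G+2) s'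
        push_cast at this
        linarith
      -- near optimal q for s with r
      obtain ⟨xv, ⟨q, hq, rfl⟩, hxv⟩ :=
        exists_lt_of_lt_csSup (inner_nonempty hK (G+1) s r)
          (sub_lt_self (sSup (inner' K (G+1) s r)) hε0)
      -- hxv : sSup - ε < V K (G+1) (fun k => s k + q k / r k)
      have hbound : ∀ j, (s j + q j / r j) - (s k0 + q k0 / r k0) ≤ D + ((G:ℝ)+2)*(K:ℝ) + 2 := by
        intro j
        have hq1 : q j / r j ≤ 1 / r j := by
          gcongr
          exacts [(hr.1 j).le, simplex_le_one hq j]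
        have hq0 : 0 ≤ q k0 / r k0 := div_nonneg (hq.1 k0) (hr.1 k0).le
        have h1 := hM j
        have h2 := hsk j
        linarith
      have hIH := ih hG1 (D + ((G:ℝ)+2)*(K:ℝ) + 2) hD'0
        (fun k => s k + q k / r k) k0 c hc0 hc1 hbound
      have hshift : (fun k => (s k + q k / r k) + if k = k0 then c else 0)
          = (fun k => s' k + q k / r k) := by
        funext k
        simp only [hs'def]
        ring
      rw [hshift] at hIH
      have h3 : V K (G+1) (fun k => s' k + q k / r k) ≤ sSup (inner' K (G+1) s' r) :=
        V_le_sSup_inner hK (G+1) s' hr hq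
      have h4 : V K (G+2) s ≤ sSup (inner' K (G+1) s r) := V_succ_le hK (G+1) s hr
      linarith

/-- Coordinate-wise monotonicity of the value function: weak for all horizons, and
strict (assuming `sHat ≠ s`) for horizons `H ≥ 1`. -/
theorem value_coordinatewise_monotone (K : ℕ) (hK : 1 ≤ K) (sHat s : Fin K → ℝ)
    (h : ∀ k, s k ≤ sHat k) :
    (∀ H : ℕ, V K H s ≤ V K H sHat) ∧
    (sHat ≠ s → ∀ H : ℕ, 1 ≤ H → V K H s < V K H sHat) := by
  haveI : Nonempty (Fin K) := ⟨⟨0, hK⟩⟩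
  constructor
  · intro H; exact V_mono K hK H s sHat h
  · intro hne H hH1
    have hex : ∃ k0, s k0 ≠ sHat k0 := by
      by_contra hc
      push_neg at hc
      exact hne (funext fun k => (hc k).symm)
    obtain ⟨k0, hk0⟩ := hex
    have hk0' : s k0 < sHat k0 := lt_of_le_of_ne (h k0) hk0
    have hc0 : 0 < min (sHat k0 - s k0) 1 := lt_min (by linarith) one_pos
    have hc1 : min (sHat k0 - s k0) 1 ≤ 1 := min_le_right _ _
    have hD0 : 0 ≤ (⨆ j, s j) - s k0 := by
      have := le_ciSup (Set.Finite.bddAbove (Set.finite_range s)) k0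
      linarith
    have hDj : ∀ j, s j - s k0 ≤ (⨆ j, s j) - s k0 := fun j => by
      have := le_ciSup (Set.Finite.bddAbove (Set.finite_range s)) j
      linarith
    obtain ⟨H', rfl⟩ : ∃ H', H = H' + 1 := ⟨H - 1, by omega⟩
    have hg := gap hK (H'+1) (by omega) _ hD0 s k0 _ hc0 hc1 hDj
    have hgampos := gam_pos hK (H'+1) _ hD0
    have hmono : V K (H'+1) (fun k => s k + if k = k0 then min (sHat k0 - s k0) 1 else 0)
        ≤ V K (H'+1) sHat := by
      apply V_mono K hK
      intro k
      by_cases hk : k = k0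
      · subst hk
        simp only [eq_self_iff_true, if_true]
        have := min_le_left (sHat k - s k) 1
        linarith
      · simp only [if_neg hk]
        have := h k
        linarith
    nlinarith [hg, hmono, mul_pos hc0 hgampos]
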